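/- Let X ⊆ E be convex, φ, φ̂ : X → ℝ be λ̄-weakly convex, and suppose sup_{u ∈ X} |φ̂(u) - φ(u)| ≤ Δ. Then for every x ∈ X, ‖∇φ̂_{2λ̄}(x) - ∇φ_{2λ̄}(x)‖ ≤ √(8 λ̄ Δ), where φ_{2λ̄}(x) = min_{u ∈ X} { φ(u) + λ̄‖u - x‖² } is the Moreau envelope and ∇φ_{2λ̄}(x) = 2λ̄(x - x⁺) with x⁺ the corresponding proximal point (similarly for φ̂). -/

import Mathlib

lemma combo_norm_sq {E : Type*} [NormedAddCommGroup E] [InnerProductSpace ℝ E]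
    (a b c : E) (t : ℝ) :
    ‖((1-t)•a + t•b) - c‖^2
      = (1-t)*‖a-c‖^2 + t*‖b-c‖^2 - t*(1-t)*‖a-b‖^2 := by
  have h1 : ((1-t)•a + t•b) - c = (1-t)•(a-c) + t•(b-c) := by
    simp [smul_sub, sub_smul]; abel
  have h2 : a - b = (a-c) - (b-c) := by abel
  have e1 : ‖(1-t)•(a-c) + t•(b-c)‖^2
      = ‖(1-t)•(a-c)‖^2 + 2*inner ℝ ((1-t)•(a-c)) (t•(b-c)) + ‖t•(b-c)‖^2 :=
    norm_add_sq_real _ _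
  have e2 : ‖(a-c) - (b-c)‖^2
      = ‖a-c‖^2 - 2*inner ℝ (a-c) (b-c) + ‖b-c‖^2 := norm_sub_sq_real _ _
  rw [h1, h2, e1, e2, real_inner_smul_left, real_inner_smul_right,
    norm_smul, norm_smul]
  simp only [Real.norm_eq_abs, mul_pow, sq_abs]
  ring

lemma decomp_norm_sq {E : Type*} [NormedAddCommGroup E] [InnerProductSpace ℝ E]
    (w x : E) : ‖w - x‖^2 * 2 = ‖w‖^2 + ‖w - (2:ℝ)•x‖^2 - 2*‖x‖^2 := by
  rw [norm_sub_sq_real, norm_sub_sq_real, real_inner_smul_right, norm_smul]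
  simp only [Real.norm_eq_abs, mul_pow, sq_abs]
  ring

lemma growth {E : Type*} [NormedAddCommGroup E] [InnerProductSpace ℝ E]
    (X : Set E) (hX : Convex ℝ X) (ψ : E → ℝ) (lam : ℝ) (hlam : 0 < lam)
    (hψ : ConvexOn ℝ X (fun u => ψ u + lam / 2 * ‖u‖ ^ 2))
    (x : E) (p : E) (hp : p ∈ X)
    (hmin : ∀ u ∈ X, ψ p + lam * ‖p - x‖ ^ 2 ≤ ψ u + lam * ‖u - x‖ ^ 2)
    (u : E) (hu : u ∈ X) :
    ψ p + lam * ‖p - x‖ ^ 2 + lam / 2 * ‖u - p‖ ^ 2 ≤ ψ u + lam * ‖u - x‖ ^ 2 := by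
  set A : ℝ := (ψ u + lam * ‖u - x‖ ^ 2) - (ψ p + lam * ‖p - x‖ ^ 2) with hA
  set B : ℝ := lam / 2 * ‖u - p‖ ^ 2 with hB
  have hBnn : 0 ≤ B := by positivity
  have key : ∀ t : ℝ, 0 < t → t < 1 → (1 - t) * B ≤ A := by
    intro t ht0 ht1
    set z : E := (1-t)•p + t•u with hz
    have hzX : z ∈ X := hX hp hu (by linarith) (by linarith) (by ring)
    have hg : ψ z + lam / 2 * ‖z‖ ^ 2
        ≤ (1-t) * (ψ p + lam / 2 * ‖p‖ ^ 2) + t * (ψ u + lam / 2 * ‖u‖ ^ 2) :=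
      hψ.2 hp hu (by linarith) (by linarith) (by ring)
    have hc : ‖z - (2:ℝ)•x‖^2
        = (1-t)*‖p-(2:ℝ)•x‖^2 + t*‖u-(2:ℝ)•x‖^2 - t*(1-t)*‖p-u‖^2 :=
      combo_norm_sq p u ((2:ℝ)•x) t
    have dz := decomp_norm_sq z x
    have dp := decomp_norm_sq p x
    have du := decomp_norm_sq u x
    have hmz := hmin z hzX
    have hpu : ‖p - u‖ = ‖u - p‖ := norm_sub_rev p u
    rw [hpu] at hc
    have hle : ψ p + lam * ‖p - x‖^2
        ≤ (1-t) * (ψ p + lam * ‖p - x‖^2) + t * (ψ u + lam * ‖u - x‖^2)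
          - t * (1-t) * B := by
      calc ψ p + lam * ‖p - x‖^2 ≤ ψ z + lam * ‖z - x‖^2 := hmz
        _ = (ψ z + lam / 2 * ‖z‖^2) + (lam / 2 * ‖z - (2:ℝ)•x‖^2 - lam * ‖x‖^2) := by
            linear_combination (lam/2) * dz
        _ ≤ ((1-t) * (ψ p + lam / 2 * ‖p‖^2) + t * (ψ u + lam / 2 * ‖u‖^2))
            + (lam / 2 * ‖z - (2:ℝ)•x‖^2 - lam * ‖x‖^2) := by linarith [hg]
        _ = (1-t) * (ψ p + lam * ‖p - x‖^2) + t * (ψ u + lam * ‖u - x‖^2)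
            - t * (1-t) * B := by
            linear_combination (lam/2) * hc - ((1-t)*(lam/2)) * dp - (t*(lam/2)) * du
    have hmul : t * ((1 - t) * B) ≤ t * A := by nlinarith [hle]
    exact le_of_mul_le_mul_left hmul ht0
  by_contra hcon
  push_neg at hcon
  have hconAB : A < B := by rw [hA, hB]; linarith
  have half := key (1/2) (by norm_num) (by norm_num)
  have hBpos : 0 < B := by linarith
  have hBA : 0 < B - A := by linarith
  have ht0 : 0 < (B - A) / (2 * B) := by positivity
  have ht1 : (B - A) / (2 * B) < 1 := by
    rw [div_lt_one (by linarith)]; linarith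
  have hk := key _ ht0 ht1
  have hid : (1 - (B - A) / (2 * B)) * B = (B + A) / 2 := by
    field_simp; ring
  rw [hid] at hk
  linarith

/-- Gradients of the Moreau envelopes of two uniformly close weakly convex functions are close. -/
theorem stmt5 {E : Type*} [NormedAddCommGroup E] [InnerProductSpace ℝ E]
    [FiniteDimensional ℝ E] (X : Set E) (hX : Convex ℝ X) (hXc : IsClosed X)
    (φ φhat : E → ℝ) (lam : ℝ) (hlam : 0 < lam)
    (hφ : ConvexOn ℝ X (fun u => φ u + lam / 2 * ‖u‖ ^ 2))
    (hφhat : ConvexOn ℝ X (fun u => φhat u + lam / 2 * ‖u‖ ^ 2))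
    (Δ : ℝ) (hgap : ∀ u ∈ X, |φhat u - φ u| ≤ Δ)
    (x : E) (hx : x ∈ X)
    (xp : E) (hxp : xp ∈ X)
    (hxpmin : ∀ u ∈ X, φ xp + lam * ‖xp - x‖ ^ 2 ≤ φ u + lam * ‖u - x‖ ^ 2)
    (xhp : E) (hxhp : xhp ∈ X)
    (hxhpmin : ∀ u ∈ X, φhat xhp + lam * ‖xhp - x‖ ^ 2 ≤ φhat u + lam * ‖u - x‖ ^ 2) :
    ‖(2 * lam) • (x - xhp) - (2 * lam) • (x - xp)‖ ≤ Real.sqrt (8 * lam * Δ) := by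
  have g1 := growth X hX φ lam hlam hφ x xp hxp hxpmin xhp hxhp
  have g2 := growth X hX φhat lam hlam hφhat x xhp hxhp hxhpmin xp hxp
  have hrev : ‖xhp - xp‖ = ‖xp - xhp‖ := norm_sub_rev xhp xp
  rw [hrev] at g1
  have hgap1 := (abs_le.mp (hgap xp hxp))
  have hgap2 := (abs_le.mp (hgap xhp hxhp))
  have hd2 : lam * ‖xp - xhp‖ ^ 2 ≤ 2 * Δ := by linarith
  have heq : (2 * lam) • (x - xhp) - (2 * lam) • (x - xp) = (2 * lam) • (xp - xhp) := by
    rw [← smul_sub]; congr 1; abel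
  rw [heq, norm_smul, Real.norm_eq_abs, abs_of_pos (by linarith)]
  have hrest : (2*lam*‖xp - xhp‖)^2 ≤ 8*lam*Δ := by nlinarith [norm_nonneg (xp - xhp)]
  calc 2 * lam * ‖xp - xhp‖ = Real.sqrt ((2*lam*‖xp - xhp‖)^2) := by
        rw [Real.sqrt_sq (by positivity)]
    _ ≤ _ := Real.sqrt_le_sqrt hrest
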